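/- Fix ν > 0, M > 0, γ₀, γ₁ ∈ (0,1), γ₂ ∈ (0,1), t ≥ 0, and let b = b(t,·) be the shear flow at time t. Let q(y) = b''(y)/b(y) for y ≠ 0, extended continuously to y = 0. Suppose λ₁ < 0 and λ₂ < 0 are such that for j = 1,2 there exists a nonzero twice continuously differentiable real function φⱼ with φⱼ, φⱼ', φⱼ'' ∈ L²(ℝ) satisfying −φⱼ''(y) + q(y)·φⱼ(y) = λⱼ·φⱼ(y) for all y ∈ ℝ. Then λ₁ = λ₂; that is, the Schrödinger operator L = −d²/dy² + b''/b has at most one negative eigenvalue. -/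

import Mathlib

open MeasureTheory Real Filter Set

noncomputable section

/-- The shear flow `b(t,y)` from the paper (eq. (1.6)/(2.1)):
`b(t,y) = y + M·(∫₀^y (γ₀²/√(4νt+γ₀²))·exp(−z²/(4νt+γ₀²)) dz
  − γ₂·∫₀^y (γ₀²γ₁³/√(4νt+γ₀²γ₁²))·exp(−z²/(4νt+γ₀²γ₁²)) dz)`. -/
def shearFlow (ν M γ₀ γ₁ γ₂ : ℝ) (t y : ℝ) : ℝ :=
  y + M * ((∫ z in (0:ℝ)..y, γ₀^2 / Real.sqrt (4*ν*t + γ₀^2) * Real.exp (-z^2 / (4*ν*t + γ₀^2)))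
    - γ₂ * ∫ z in (0:ℝ)..y, γ₀^2 * γ₁^3 / Real.sqrt (4*ν*t + γ₀^2*γ₁^2) *
        Real.exp (-z^2 / (4*ν*t + γ₀^2*γ₁^2)))

/-- The potential `q = b''/b`, extended continuously at `y = 0`
(where `b(0) = b''(0) = 0`). -/
def qExt (b : ℝ → ℝ) : ℝ → ℝ := fun y =>
  if y = 0 then limUnder (nhdsWithin 0 {(0:ℝ)}ᶜ) (fun z => deriv (deriv b) z / b z)
  else deriv (deriv b) y / b y

/-- The set of Rayleigh quotients `∫|φ'|² + ∫ (b''/b)·φ²` over normalized `φ ∈ H¹(ℝ)`. -/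
def lambdaSet (b : ℝ → ℝ) : Set ℝ :=
  { E | ∃ φ : ℝ → ℝ, Differentiable ℝ φ ∧ MemLp φ 2 (volume : Measure ℝ) ∧
      MemLp (deriv φ) 2 (volume : Measure ℝ) ∧ (∫ y : ℝ, (φ y)^2) = 1 ∧
      E = (∫ y : ℝ, (deriv φ y)^2) + ∫ y : ℝ, qExt b y * (φ y)^2 }

/-- `λ(M,t)`: the infimum of the Rayleigh quotient for the shear flow. -/
def lambdaVal (ν M γ₀ γ₁ γ₂ t : ℝ) : ℝ := sInf (lambdaSet (shearFlow ν M γ₀ γ₁ γ₂ t))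

/-- `c` is an eigenvalue of the Rayleigh operator `R_{b,k} = b·Id − b''·(∂_y² − k²)⁻¹`:
there are `ω ∈ L²(ℝ,ℂ)`, `ω ≠ 0`, and a `C²` stream function `ψ` with
`ψ, ψ', ψ'' ∈ L²`, such that `ψ'' − k²ψ = ω` everywhere and
`(b − c)·ω = b''·ψ` almost everywhere. -/
def IsRayleighEigenvalue (b : ℝ → ℝ) (k : ℝ) (c : ℂ) : Prop :=
  ∃ ω ψ : ℝ → ℂ,
    MemLp ω 2 (volume : Measure ℝ) ∧ ¬ (ω =ᵐ[(volume : Measure ℝ)] (0 : ℝ → ℂ)) ∧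
    ContDiff ℝ 2 ψ ∧ MemLp ψ 2 (volume : Measure ℝ) ∧
    MemLp (deriv ψ) 2 (volume : Measure ℝ) ∧ MemLp (deriv (deriv ψ)) 2 (volume : Measure ℝ) ∧
    (∀ y : ℝ, deriv (deriv ψ) y - (k:ℂ)^2 * ψ y = ω y) ∧
    (∀ᵐ y : ℝ ∂(volume : Measure ℝ),
      ((b y : ℂ) - c) * ω y = ((deriv (deriv b) y : ℝ) : ℂ) * ψ y)


lemma not_memLp_of_set {φ : ℝ → ℝ} {p : ENNReal} (hp0 : p ≠ 0) (hpt : p ≠ ⊤)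
    (hφ : MemLp φ p (volume : Measure ℝ)) {s : Set ℝ} (hs : MeasurableSet s)
    (hsv : volume s = ⊤) {δ : ℝ} (hδ : 0 < δ) (h : ∀ y ∈ s, δ ≤ φ y) : False := by
  have hμ : (volume : Measure ℝ).restrict s ≠ 0 := by
    intro hcon
    have := Measure.restrict_apply_univ (μ := (volume : Measure ℝ)) s
    rw [hcon] at this
    rw [← this] at hsv
    simp at hsv
  have h1 : eLpNorm (fun _ : ℝ => δ) p ((volume : Measure ℝ).restrict s) ≤
      eLpNorm φ p ((volume : Measure ℝ).restrict s) := by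
    apply eLpNorm_mono_ae
    filter_upwards [ae_restrict_mem hs] with y hy
    have := h y hy
    simp only [Real.norm_eq_abs]
    rw [abs_of_pos hδ]
    exact this.trans (le_abs_self _)
  have h2 : eLpNorm (fun _ : ℝ => δ) p ((volume : Measure ℝ).restrict s) = ⊤ := by
    have htr : 0 < 1 / p.toReal := by
      simp only [one_div, inv_pos]
      exact ENNReal.toReal_pos hp0 hpt
    rw [eLpNorm_const _ hp0 hμ, Measure.restrict_apply_univ, hsv,
      ENNReal.top_rpow_of_pos htr, ENNReal.mul_top (by simpa using hδ.ne')]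
  have h3 : eLpNorm φ p ((volume : Measure ℝ).restrict s) ≤ eLpNorm φ p volume :=
    eLpNorm_mono_measure _ Measure.restrict_le_self
  have h4 : (⊤ : ENNReal) ≤ eLpNorm φ p volume := by rw [← h2]; exact h1.trans h3
  exact hφ.2.ne (top_le_iff.mp h4)

lemma deriv_nonneg_at_zero' {φ φ' : ℝ → ℝ} {c : ℝ}
    (hd : HasDerivAt φ (φ' c) c) (h0 : φ c = 0)
    (hpos : ∀ᶠ y in nhdsWithin c (Ioi c), 0 ≤ φ y) :
    0 ≤ φ' c := by
  have hs := hasDerivAt_iff_tendsto_slope.mp hd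
  have hs' : Tendsto (slope φ c) (nhdsWithin c (Ioi c)) (nhds (φ' c)) :=
    hs.mono_left (nhdsWithin_mono _ (fun y hy => ne_of_gt hy))
  refine ge_of_tendsto hs' ?_
  filter_upwards [self_mem_nhdsWithin, hpos] with y hy hy2
  rw [slope_def_field, h0, sub_zero]
  exact div_nonneg hy2 (by linarith [mem_Ioi.mp hy])

lemma deriv_nonpos_at_zero' {φ φ' : ℝ → ℝ} {d : ℝ}
    (hd : HasDerivAt φ (φ' d) d) (h0 : φ d = 0)
    (hpos : ∀ᶠ y in nhdsWithin d (Iio d), 0 ≤ φ y) :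
    φ' d ≤ 0 := by
  have hs := hasDerivAt_iff_tendsto_slope.mp hd
  have hs' : Tendsto (slope φ d) (nhdsWithin d (Iio d)) (nhds (φ' d)) :=
    hs.mono_left (nhdsWithin_mono _ (fun y hy => ne_of_lt hy))
  refine le_of_tendsto hs' ?_
  filter_upwards [self_mem_nhdsWithin, hpos] with y hy hy2
  rw [slope_def_field, h0, sub_zero]
  exact div_nonpos_of_nonneg_of_nonpos hy2 (by linarith [mem_Iio.mp hy])


section Core
variable {B B' B'' Q φ φ' : ℝ → ℝ} {lam : ℝ}

lemma wronskian_deriv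
    (hBd : ∀ y, HasDerivAt B (B' y) y) (hBd2 : ∀ y, HasDerivAt B' (B'' y) y)
    (hQB : ∀ y, y ≠ 0 → B'' y = Q y * B y)
    (hφd : ∀ y, HasDerivAt φ (φ' y) y)
    (hφd2 : ∀ y, HasDerivAt φ' ((Q y - lam) * φ y) y)
    {y : ℝ} (hy : y ≠ 0) :
    HasDerivAt (fun y => φ' y * B y - φ y * B' y) (-lam * (φ y * B y)) y := by
  have h := ((hφd2 y).fun_mul (hBd y)).fun_sub ((hφd y).fun_mul (hBd2 y))
  rw [hQB y hy] at h
  exact h.congr_deriv (by ring)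

lemma coreB
    (hBd : ∀ y, HasDerivAt B (B' y) y) (hBd2 : ∀ y, HasDerivAt B' (B'' y) y)
    (hQB : ∀ y, y ≠ 0 → B'' y = Q y * B y)
    (hBpos : ∀ y, 0 ≤ y → y ≤ B y)
    (hφd : ∀ y, HasDerivAt φ (φ' y) y)
    (hφd2 : ∀ y, HasDerivAt φ' ((Q y - lam) * φ y) y)
    (hlam : lam < 0) {c d : ℝ} (hc : 0 ≤ c) (hcd : c < d)
    (hφc : φ c = 0) (hφdz : φ d = 0)
    (hpos : ∀ y, c < y → y < d → 0 < φ y) : False := by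
  set W : ℝ → ℝ := fun y => φ' y * B y - φ y * B' y with hW
  have hWc : Continuous W := by
    have : ∀ y, ContinuousAt W y := fun y =>
      (((hφd2 y).continuousAt.mul (hBd y).continuousAt).sub
        ((hφd y).continuousAt.mul (hBd2 y).continuousAt))
    exact continuous_iff_continuousAt.mpr this
  have hmono : StrictMonoOn W (Icc c d) := by
    apply strictMonoOn_of_deriv_pos (convex_Icc c d) hWc.continuousOn
    intro y hy
    rw [interior_Icc] at hy
    have hy0 : (0:ℝ) < y := lt_of_le_of_lt hc hy.1
    rw [(wronskian_deriv hBd hBd2 hQB hφd hφd2 hy0.ne').deriv]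
    have hBy : 0 < B y := lt_of_lt_of_le hy0 (hBpos y hy0.le)
    exact mul_pos (by linarith) (mul_pos (hpos y hy.1 hy.2) hBy)
  have hWcge : 0 ≤ W c := by
    have h1 : 0 ≤ φ' c := by
      apply deriv_nonneg_at_zero' (hφd c) hφc
      filter_upwards [Ioo_mem_nhdsGT_of_mem (Set.left_mem_Ico.mpr hcd)] with y hy
      exact (hpos y hy.1 hy.2).le
    have h2 : 0 ≤ B c := le_trans hc (hBpos c hc)
    rw [hW]; simp only [hφc]
    nlinarith
  have hWdle : W d ≤ 0 := by
    have h1 : φ' d ≤ 0 := by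
      apply deriv_nonpos_at_zero' (hφd d) hφdz
      filter_upwards [Ioo_mem_nhdsLT_of_mem (Set.right_mem_Ioc.mpr hcd)] with y hy
      exact (hpos y hy.1 hy.2).le
    have h2 : 0 ≤ B d := le_trans (hc.trans hcd.le) (hBpos d (hc.trans hcd.le))
    rw [hW]; simp only [hφdz]
    nlinarith
  have := hmono (Set.left_mem_Icc.mpr hcd.le) (Set.right_mem_Icc.mpr hcd.le) hcd
  linarith

lemma coreA
    (hBd : ∀ y, HasDerivAt B (B' y) y) (hBd2 : ∀ y, HasDerivAt B' (B'' y) y)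
    (hQB : ∀ y, y ≠ 0 → B'' y = Q y * B y)
    (hBpos : ∀ y, 0 ≤ y → y ≤ B y)
    (hφd : ∀ y, HasDerivAt φ (φ' y) y)
    (hφd2 : ∀ y, HasDerivAt φ' ((Q y - lam) * φ y) y)
    (hφL2 : MemLp φ 2 (volume : Measure ℝ))
    (hlam : lam < 0) {c : ℝ} (hc : 0 ≤ c) (hφc : φ c = 0)
    (hpos : ∀ y, c < y → 0 < φ y) : False := by
  set W : ℝ → ℝ := fun y => φ' y * B y - φ y * B' y with hW
  have hWc : Continuous W := by
    have : ∀ y, ContinuousAt W y := fun y =>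
      (((hφd2 y).continuousAt.mul (hBd y).continuousAt).sub
        ((hφd y).continuousAt.mul (hBd2 y).continuousAt))
    exact continuous_iff_continuousAt.mpr this
  have hmono : StrictMonoOn W (Ici c) := by
    apply strictMonoOn_of_deriv_pos (convex_Ici c) hWc.continuousOn
    intro y hy
    rw [interior_Ici] at hy
    have hy0 : (0:ℝ) < y := lt_of_le_of_lt hc hy
    rw [(wronskian_deriv hBd hBd2 hQB hφd hφd2 hy0.ne').deriv]
    have hBy : 0 < B y := lt_of_lt_of_le hy0 (hBpos y hy0.le)
    exact mul_pos (by linarith) (mul_pos (hpos y hy) hBy)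
  have hWcge : 0 ≤ W c := by
    have h1 : 0 ≤ φ' c := by
      apply deriv_nonneg_at_zero' (hφd c) hφc
      filter_upwards [self_mem_nhdsWithin] with y hy
      exact (hpos y hy).le
    have h2 : 0 ≤ B c := le_trans hc (hBpos c hc)
    rw [hW]; simp only [hφc]
    nlinarith
  have hWpos : ∀ y, c < y → 0 < W y := fun y hy =>
    lt_of_le_of_lt hWcge (hmono Set.self_mem_Ici (le_of_lt hy) hy)
  -- ratio φ / B strictly increasing on Ici (c+1)
  have hBgt : ∀ y, c < y → 0 < B y := fun y hy =>
    lt_of_lt_of_le (lt_of_le_of_lt hc hy) (hBpos y (hc.trans hy.le))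
  set r : ℝ → ℝ := fun y => φ y / B y with hr
  have hrd : ∀ y, c < y → HasDerivAt r (((φ' y) * B y - φ y * B' y) / (B y)^2) y :=
    fun y hy => (hφd y).div (hBd y) (hBgt y hy).ne'
  have hrmono : StrictMonoOn r (Ici (c+1)) := by
    apply strictMonoOn_of_deriv_pos (convex_Ici (c+1))
    · intro y hy
      exact ((hrd y (by simp only [mem_Ici] at hy; linarith)).continuousAt).continuousWithinAt
    · intro y hy
      rw [interior_Ici] at hy
      have hyc : c < y := by simp only [mem_Ioi] at hy; linarith
      rw [(hrd y hyc).deriv]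
      exact div_pos (hWpos y hyc) (pow_pos (hBgt y hyc) 2)
  set ε : ℝ := r (c+1) with hε
  have hεpos : 0 < ε := div_pos (hpos (c+1) (by linarith)) (hBgt (c+1) (by linarith))
  have hδ : ∀ y, c+1 ≤ y → ε * (c+1) ≤ φ y := by
    intro y hy
    have h1 : ε ≤ r y := by
      rcases eq_or_lt_of_le hy with h | h
      · rw [← h]
      · exact (hrmono Set.self_mem_Ici (mem_Ici.mpr hy) h).le
    have hBy : 0 < B y := hBgt y (by linarith)
    have h2 : ε * B y ≤ φ y := (le_div_iff₀ hBy).mp h1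
    have h3 : c + 1 ≤ B y := le_trans hy (hBpos y (by linarith))
    nlinarith
  exact not_memLp_of_set (p := 2) (by norm_num) (by norm_num) hφL2 measurableSet_Ici
    Real.volume_Ici (mul_pos hεpos (by linarith : (0:ℝ) < c+1)) (fun y hy => hδ y hy)

end Core

lemma pos_right_of_deriv_pos {φ φ' : ℝ → ℝ} {z : ℝ}
    (hd : HasDerivAt φ (φ' z) z) (h0 : φ z = 0) (h' : 0 < φ' z) :
    ∃ η > 0, ∀ y, z < y → y < z + η → 0 < φ y := by
  have hs := hasDerivAt_iff_tendsto_slope.mp hd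
  have hs' : Tendsto (slope φ z) (nhdsWithin z (Ioi z)) (nhds (φ' z)) :=
    hs.mono_left (nhdsWithin_mono _ (fun y hy => ne_of_gt hy))
  have hev : ∀ᶠ y in nhdsWithin z (Ioi z), 0 < slope φ z y :=
    hs'.eventually (eventually_gt_nhds h')
  rw [eventually_nhdsWithin_iff] at hev
  rcases Metric.eventually_nhds_iff.mp hev with ⟨η, hη, hball⟩
  refine ⟨η, hη, fun y hy1 hy2 => ?_⟩
  have h3 : 0 < slope φ z y := by
    refine hball (y := y) ?_ hy1
    rw [Real.dist_eq, abs_of_pos (by linarith)]; linarith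
  rw [slope_def_field, h0, sub_zero] at h3
  have := mul_pos h3 (sub_pos.mpr hy1)
  rwa [div_mul_cancel₀] at this
  linarith


section Core
variable {Q φ φ' : ℝ → ℝ} {lam : ℝ}

lemma odeUnique (hQc : Continuous Q)
    (hφd : ∀ y, HasDerivAt φ (φ' y) y)
    (hφd2 : ∀ y, HasDerivAt φ' ((Q y - lam) * φ y) y)
    {z : ℝ} (h0 : φ z = 0) (h0' : φ' z = 0) : ∀ x, φ x = 0 := by
  set E : ℝ → ℝ := fun y => φ y ^ 2 + φ' y ^ 2 with hE
  have hEd : ∀ y, HasDerivAt E (2 * φ y * φ' y + 2 * φ' y * ((Q y - lam) * φ y)) y := by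
    intro y
    have h1 : HasDerivAt (fun y => φ y ^ 2) (2 * φ y * φ' y) y := by
      simpa using (hφd y).fun_pow 2
    have h2 : HasDerivAt (fun y => φ' y ^ 2) (2 * φ' y * ((Q y - lam) * φ y)) y := by
      simpa using (hφd2 y).fun_pow 2
    simpa using h1.fun_add h2
  have hEc : Continuous E := by
    refine continuous_iff_continuousAt.mpr fun y => (hEd y).continuousAt
  have hEnn : ∀ y, 0 ≤ E y := fun y => by positivity
  have hEz : E z = 0 := by rw [hE]; simp [h0, h0']
  -- bound on an interval
  have key : ∀ a b : ℝ, a ≤ b → ∀ K : ℝ, (∀ y ∈ Icc a b, |Q y - lam| ≤ K - 1) →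
      (∀ y ∈ Icc a b, |2 * φ y * φ' y + 2 * φ' y * ((Q y - lam) * φ y)| ≤ K * E y) := by
    intro a b hab K hK y hy
    have hm := hK y hy
    have hm1 : Q y - lam ≤ K - 1 := (abs_le.mp hm).2
    have hm2 : -(K - 1) ≤ Q y - lam := (abs_le.mp hm).1
    have hEy : E y = φ y ^ 2 + φ' y ^ 2 := rfl
    have hsq : (0:ℝ) ≤ φ y ^ 2 + φ' y ^ 2 := by positivity
    have t1 : 0 ≤ (K - 1 - (Q y - lam)) * (φ y ^ 2 + φ' y ^ 2) := mul_nonneg (by linarith) hsq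
    have t2 : 0 ≤ (K - 1 + (Q y - lam)) * (φ y ^ 2 + φ' y ^ 2) := mul_nonneg (by linarith) hsq
    rw [hEy, abs_le]
    rcases le_or_gt 0 (1 + (Q y - lam)) with h | h
    · constructor
      · nlinarith [mul_nonneg h (sq_nonneg (φ y + φ' y)), t1, hsq]
      · nlinarith [mul_nonneg h (sq_nonneg (φ y - φ' y)), t1, hsq]
    · constructor
      · nlinarith [mul_nonneg (by linarith : (0:ℝ) ≤ -(1 + (Q y - lam))) (sq_nonneg (φ y - φ' y)), t2, hsq]
      · nlinarith [mul_nonneg (by linarith : (0:ℝ) ≤ -(1 + (Q y - lam))) (sq_nonneg (φ y + φ' y)), t2, hsq]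
  have main : ∀ x, E x = 0 := by
    intro x
    rcases le_total z x with hzx | hzx
    · -- forward
      obtain ⟨C, hC⟩ := (isCompact_Icc (a := z) (b := x)).exists_bound_of_continuousOn
        ((hQc.sub continuous_const).continuousOn)
      set K : ℝ := |C| + 1 with hKdef
      have hK : ∀ y ∈ Icc z x, |Q y - lam| ≤ K - 1 := by
        intro y hy
        calc |Q y - lam| = ‖Q y - lam‖ := (Real.norm_eq_abs _).symm
        _ ≤ C := hC y hy
        _ ≤ K - 1 := by rw [hKdef]; simp [le_abs_self]
      have hbd := key z x hzx K hK
      set G : ℝ → ℝ := fun y => E y * Real.exp (-K * y) with hG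
      have hGd : ∀ y, HasDerivAt G
          ((2 * φ y * φ' y + 2 * φ' y * ((Q y - lam) * φ y)) * Real.exp (-K * y)
            + E y * (Real.exp (-K * y) * (-K))) y := by
        intro y
        have he : HasDerivAt (fun y => Real.exp (-K * y)) (Real.exp (-K * y) * (-K)) y := by
          simpa using ((hasDerivAt_id y).const_mul (-K)).exp
        exact (hEd y).mul he
      have hmono : AntitoneOn G (Icc z x) := by
        apply antitoneOn_of_deriv_nonpos (convex_Icc z x)
          (continuous_iff_continuousAt.mpr fun y => (hGd y).continuousAt).continuousOn
          (fun y hy => (hGd y).differentiableAt.differentiableWithinAt)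
        intro y hy
        have hy' : y ∈ Icc z x := interior_subset hy
        rw [(hGd y).deriv]
        have h1 := (abs_le.mp (hbd y hy')).2
        have h2 : (0:ℝ) < Real.exp (-K * y) := Real.exp_pos _
        nlinarith
      have hGx : G x ≤ 0 := by
        have := hmono (Set.left_mem_Icc.mpr hzx) (Set.right_mem_Icc.mpr hzx) hzx
        rw [hG] at this ⊢
        simpa [hEz] using this
      have : E x * Real.exp (-K * x) = 0 :=
        le_antisymm hGx (by positivity)
      have hexp : Real.exp (-K * x) ≠ 0 := (Real.exp_pos _).ne'
      exact (mul_eq_zero.mp this).resolve_right hexp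
    · -- backward
      obtain ⟨C, hC⟩ := (isCompact_Icc (a := x) (b := z)).exists_bound_of_continuousOn
        ((hQc.sub continuous_const).continuousOn)
      set K : ℝ := |C| + 1 with hKdef
      have hK : ∀ y ∈ Icc x z, |Q y - lam| ≤ K - 1 := by
        intro y hy
        calc |Q y - lam| = ‖Q y - lam‖ := (Real.norm_eq_abs _).symm
        _ ≤ C := hC y hy
        _ ≤ K - 1 := by rw [hKdef]; simp [le_abs_self]
      have hbd := key x z hzx K hK
      set G : ℝ → ℝ := fun y => E y * Real.exp (K * y) with hG
      have hGd : ∀ y, HasDerivAt G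
          ((2 * φ y * φ' y + 2 * φ' y * ((Q y - lam) * φ y)) * Real.exp (K * y)
            + E y * (Real.exp (K * y) * K)) y := by
        intro y
        have he : HasDerivAt (fun y => Real.exp (K * y)) (Real.exp (K * y) * K) y := by
          simpa using ((hasDerivAt_id y).const_mul K).exp
        exact (hEd y).mul he
      have hmono : MonotoneOn G (Icc x z) := by
        apply monotoneOn_of_deriv_nonneg (convex_Icc x z)
          (continuous_iff_continuousAt.mpr fun y => (hGd y).continuousAt).continuousOn
          (fun y hy => (hGd y).differentiableAt.differentiableWithinAt)
        intro y hy
        have hy' : y ∈ Icc x z := interior_subset hy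
        rw [(hGd y).deriv]
        have h1 := (abs_le.mp (hbd y hy')).1
        have h2 : (0:ℝ) < Real.exp (K * y) := Real.exp_pos _
        nlinarith
      have hGx : G x ≤ 0 := by
        have := hmono (Set.left_mem_Icc.mpr hzx) (Set.right_mem_Icc.mpr hzx) hzx
        rw [hG] at this ⊢
        simpa [hEz] using this
      have : E x * Real.exp (K * x) = 0 :=
        le_antisymm hGx (by positivity)
      have hexp : Real.exp (K * x) ≠ 0 := (Real.exp_pos _).ne'
      exact (mul_eq_zero.mp this).resolve_right hexp
  intro x
  have h1 := main x
  have h2 : φ x ^ 2 + φ' x ^ 2 = 0 := h1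
  have := sq_nonneg (φ x)
  have := sq_nonneg (φ' x)
  have h3 : φ x ^ 2 = 0 := by linarith
  exact pow_eq_zero_iff (by norm_num) |>.mp h3
end Core


section Core
variable {B B' B'' Q φ φ' : ℝ → ℝ} {lam : ℝ}

lemma sign_propagate {φ : ℝ → ℝ} (hc : Continuous φ) {z η : ℝ} (hη : 0 < η)
    (hloc : ∀ y, z < y → y < z + η → 0 < φ y) {y : ℝ} (hy : z < y) (hyneg : φ y < 0) :
    ∃ u, z + η ≤ u ∧ u < y ∧ φ u = 0 := by
  set w : ℝ := z + min η (y - z) / 2 with hw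
  have hmin : 0 < min η (y - z) := lt_min hη (by linarith)
  have hw1 : z < w := by rw [hw]; linarith
  have hw2 : w < z + η := by
    have : min η (y - z) ≤ η := min_le_left _ _
    rw [hw]; linarith
  have hw3 : w < y := by
    have : min η (y - z) ≤ y - z := min_le_right _ _
    rw [hw]; linarith
  have hφw : 0 < φ w := hloc w hw1 hw2
  have h0 : (0:ℝ) ∈ Ioo (φ y) (φ w) := ⟨hyneg, hφw⟩
  obtain ⟨u, hu, hu0⟩ := intermediate_value_Ioo' hw3.le hc.continuousOn h0
  refine ⟨u, ?_, hu.2, hu0⟩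
  by_contra hcon
  push_neg at hcon
  exact absurd hu0 (hloc u (hw1.trans hu.1) hcon).ne'

lemma nodelessAuxPos
    (hBd : ∀ y, HasDerivAt B (B' y) y) (hBd2 : ∀ y, HasDerivAt B' (B'' y) y)
    (hQB : ∀ y, y ≠ 0 → B'' y = Q y * B y)
    (hBpos : ∀ y, 0 ≤ y → y ≤ B y)
    (hφd : ∀ y, HasDerivAt φ (φ' y) y)
    (hφd2 : ∀ y, HasDerivAt φ' ((Q y - lam) * φ y) y)
    (hφL2 : MemLp φ 2 (volume : Measure ℝ))
    (hlam : lam < 0) {z : ℝ} (hz : 0 ≤ z) (hφz : φ z = 0) (hφz' : 0 < φ' z) :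
    False := by
  have hφc : Continuous φ := continuous_iff_continuousAt.mpr fun y => (hφd y).continuousAt
  obtain ⟨η, hη, hloc⟩ := pos_right_of_deriv_pos (hφd z) hφz hφz'
  set T : Set ℝ := {y | z + η ≤ y ∧ φ y = 0} with hT
  have hTclosed : IsClosed T := by
    have : T = Ici (z + η) ∩ φ ⁻¹' {0} := by
      ext y; simp [hT, mem_Ici]
    rw [this]
    exact isClosed_Ici.inter (isClosed_singleton.preimage hφc)
  rcases eq_empty_or_nonempty T with hTe | hTne
  · -- φ > 0 on (z, ∞)
    refine coreA hBd hBd2 hQB hBpos hφd hφd2 hφL2 hlam hz hφz (fun y hy => ?_)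
    rcases lt_or_ge y (z + η) with h | h
    · exact hloc y hy h
    · rcases lt_trichotomy (φ y) 0 with hneg | h0 | hpos
      · obtain ⟨u, hu1, hu2, hu3⟩ := sign_propagate hφc hη hloc hy hneg
        exact absurd (by rw [← hTe]; exact ⟨hu1, hu3⟩ : u ∈ (∅ : Set ℝ)) (notMem_empty u)
      · exact absurd (by rw [← hTe]; exact ⟨h, h0⟩ : y ∈ (∅ : Set ℝ)) (notMem_empty y)
      · exact hpos
  · set d : ℝ := sInf T with hd
    have hdT : d ∈ T := hTclosed.csInf_mem hTne ⟨z + η, fun x hx => hx.1⟩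
    have hzd : z < d := by have := hdT.1; linarith
    refine coreB hBd hBd2 hQB hBpos hφd hφd2 hlam hz hzd hφz hdT.2 (fun y hy1 hy2 => ?_)
    rcases lt_or_ge y (z + η) with h | h
    · exact hloc y hy1 h
    · rcases lt_trichotomy (φ y) 0 with hneg | h0 | hpos
      · obtain ⟨u, hu1, hu2, hu3⟩ := sign_propagate hφc hη hloc hy1 hneg
        have : d ≤ u := csInf_le ⟨z + η, fun x hx => hx.1⟩ ⟨hu1, hu3⟩
        linarith
      · have : d ≤ y := csInf_le ⟨z + η, fun x hx => hx.1⟩ ⟨h, h0⟩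
        linarith
      · exact hpos

lemma nodelessAux2
    (hBd : ∀ y, HasDerivAt B (B' y) y) (hBd2 : ∀ y, HasDerivAt B' (B'' y) y)
    (hQB : ∀ y, y ≠ 0 → B'' y = Q y * B y)
    (hBpos : ∀ y, 0 ≤ y → y ≤ B y)
    (hφd : ∀ y, HasDerivAt φ (φ' y) y)
    (hφd2 : ∀ y, HasDerivAt φ' ((Q y - lam) * φ y) y)
    (hφL2 : MemLp φ 2 (volume : Measure ℝ))
    (hlam : lam < 0) {z : ℝ} (hz : 0 ≤ z) (hφz : φ z = 0) (hφz' : φ' z ≠ 0) :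
    False := by
  rcases hφz'.lt_or_gt with h | h
  · refine nodelessAuxPos (φ := fun y => -φ y) (φ' := fun y => -φ' y)
      hBd hBd2 hQB hBpos (fun y => (hφd y).neg)
      (fun y => by simpa [mul_neg] using (hφd2 y).fun_neg) hφL2.neg hlam hz
      (by simp [hφz]) (by simpa using h)
  · exact nodelessAuxPos hBd hBd2 hQB hBpos hφd hφd2 hφL2 hlam hz hφz h

lemma nodeless
    (hBd : ∀ y, HasDerivAt B (B' y) y) (hBd2 : ∀ y, HasDerivAt B' (B'' y) y)
    (hQB : ∀ y, y ≠ 0 → B'' y = Q y * B y)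
    (hBpos : ∀ y, 0 ≤ y → y ≤ B y) (hBneg : ∀ y, y ≤ 0 → B y ≤ y)
    (hQc : Continuous Q)
    (hφd : ∀ y, HasDerivAt φ (φ' y) y)
    (hφd2 : ∀ y, HasDerivAt φ' ((Q y - lam) * φ y) y)
    (hφL2 : MemLp φ 2 (volume : Measure ℝ))
    (hlam : lam < 0) (hφne : φ ≠ 0) {z : ℝ} (hφz : φ z = 0) : False := by
  have hz' : φ' z ≠ 0 := by
    intro h
    exact hφne (funext (odeUnique hQc hφd hφd2 hφz h))
  rcases le_total 0 z with hz | hz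
  · exact nodelessAux2 hBd hBd2 hQB hBpos hφd hφd2 hφL2 hlam hz hφz hz'
  · -- reflect
    have hmp : MeasurePreserving (fun y : ℝ => -y) volume volume :=
      Measure.measurePreserving_neg _
    refine nodelessAux2 (B := fun y => -B (-y)) (B' := fun y => B' (-y))
      (B'' := fun y => -B'' (-y)) (Q := fun y => Q (-y))
      (φ := fun y => φ (-y)) (φ' := fun y => -φ' (-y)) (lam := lam)
      (fun y => ?_) (fun y => ?_) (fun y hy => ?_) (fun y hy => ?_)
      (fun y => ?_) (fun y => ?_) ?_ hlam (by linarith : (0:ℝ) ≤ -z)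
      (by simpa using hφz) (by simpa using hz')
    · simpa [Function.comp_def] using ((hBd (-y)).comp y (hasDerivAt_neg y)).fun_neg
    · simpa [Function.comp_def] using (hBd2 (-y)).comp y (hasDerivAt_neg y)
    · have := hQB (-y) (by simpa using hy)
      simp [this]
    · have := hBneg (-y) (by linarith)
      show y ≤ -B (-y)
      linarith
    · simpa [Function.comp_def] using (hφd (-y)).comp y (hasDerivAt_neg y)
    · simpa [mul_neg, neg_mul, Function.comp_def] using ((hφd2 (-y)).comp y (hasDerivAt_neg y)).fun_neg
    · exact hφL2.comp_measurePreserving hmp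

end Core


lemma tendsto_zero_of_L2 {φ φ' : ℝ → ℝ}
    (hφd : ∀ y, HasDerivAt φ (φ' y) y) (hφ'c : Continuous φ')
    (hφL2 : MemLp φ 2 (volume : Measure ℝ)) (hφ'L2 : MemLp φ' 2 (volume : Measure ℝ)) :
    Tendsto φ atTop (nhds 0) ∧ Tendsto φ atBot (nhds 0) := by
  have hφc : Continuous φ := continuous_iff_continuousAt.mpr fun y => (hφd y).continuousAt
  set h : ℝ → ℝ := fun y => 2 * φ y * φ' y with hh
  have hhc : Continuous h := by
    rw [hh]; exact (continuous_const.mul hφc).mul hφ'c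
  have hint : Integrable h (volume : Measure ℝ) := by
    refine Integrable.mono' ((hφL2.integrable_sq).add (hφ'L2.integrable_sq))
      hhc.aestronglyMeasurable ?_
    filter_upwards with y
    simp only [Pi.add_apply, Real.norm_eq_abs, hh]
    exact abs_le.mpr ⟨by nlinarith [sq_nonneg (φ y + φ' y)], by nlinarith [sq_nonneg (φ y - φ' y)]⟩
  have hftc : ∀ y : ℝ, φ y ^ 2 - φ 0 ^ 2 = ∫ x in (0:ℝ)..y, h x := by
    intro y
    rw [intervalIntegral.integral_eq_sub_of_hasDerivAt
      (fun t _ => by simpa [hh, mul_comm, mul_assoc] using (hφd t).fun_pow 2)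
      (hhc.intervalIntegrable _ _)]
  have hsq_int : Integrable (fun y => φ y ^ 2) (volume : Measure ℝ) := hφL2.integrable_sq
  have hmemsq : MemLp (fun y => φ y ^ 2) 1 (volume : Measure ℝ) :=
    (memLp_one_iff_integrable).mpr hsq_int
  constructor
  · -- atTop
    have hlim : Tendsto (fun y => ∫ x in (0:ℝ)..y, h x) atTop
        (nhds (∫ x in Ioi (0:ℝ), h x)) :=
      intervalIntegral_tendsto_integral_Ioi 0 hint.integrableOn tendsto_id
    set L : ℝ := φ 0 ^ 2 + ∫ x in Ioi (0:ℝ), h x with hLdef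
    have hsqlim : Tendsto (fun y => φ y ^ 2) atTop (nhds L) := by
      have : (fun y => φ y ^ 2) = fun y => φ 0 ^ 2 + ∫ x in (0:ℝ)..y, h x := by
        ext y; linarith [hftc y]
      rw [this, hLdef]
      exact tendsto_const_nhds.add hlim
    have hL0 : L = 0 := by
      by_contra hL
      have hLpos : 0 < L := by
        rcases (le_of_tendsto_of_tendsto' tendsto_const_nhds hsqlim
          (fun y => sq_nonneg (φ y))).lt_or_eq with h' | h'
        · exact h'
        · exact absurd h'.symm hL
      have hev : ∀ᶠ y in atTop, L / 2 < φ y ^ 2 :=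
        hsqlim.eventually (eventually_gt_nhds (by linarith))
      obtain ⟨A, hA⟩ := hev.exists_forall_of_atTop
      exact not_memLp_of_set (by norm_num) (by norm_num) hmemsq measurableSet_Ici
        Real.volume_Ici (by linarith : (0:ℝ) < L/2) (fun y hy => (hA y hy).le)
    rw [hL0] at hsqlim
    have habs : Tendsto (fun y => |φ y|) atTop (nhds 0) := by
      have := hsqlim.sqrt
      rw [Real.sqrt_zero] at this
      convert this using 2 with y
      rw [Real.sqrt_sq_eq_abs]
    exact tendsto_of_tendsto_of_tendsto_of_le_of_le (by simpa using habs.neg) habs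
      (fun y => neg_abs_le _) (fun y => le_abs_self _)
  · -- atBot
    have hlim : Tendsto (fun y => ∫ x in y..(0:ℝ), h x) atBot
        (nhds (∫ x in Iic (0:ℝ), h x)) :=
      intervalIntegral_tendsto_integral_Iic 0 hint.integrableOn tendsto_id
    set L : ℝ := φ 0 ^ 2 - ∫ x in Iic (0:ℝ), h x with hLdef
    have hsqlim : Tendsto (fun y => φ y ^ 2) atBot (nhds L) := by
      have heq : (fun y => φ y ^ 2) = fun y => φ 0 ^ 2 - ∫ x in y..(0:ℝ), h x := by
        ext y
        have h2 := hftc y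
        have h3 : ∫ x in y..(0:ℝ), h x = -∫ x in (0:ℝ)..y, h x :=
          intervalIntegral.integral_symm _ _
        rw [h3]
        linarith
      rw [heq, hLdef]
      exact tendsto_const_nhds.sub hlim
    have hL0 : L = 0 := by
      by_contra hL
      have hLpos : 0 < L := by
        rcases (le_of_tendsto_of_tendsto' tendsto_const_nhds hsqlim
          (fun y => sq_nonneg (φ y))).lt_or_eq with h' | h'
        · exact h'
        · exact absurd h'.symm hL
      have hev : ∀ᶠ y in atBot, L / 2 < φ y ^ 2 :=
        hsqlim.eventually (eventually_gt_nhds (by linarith))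
      obtain ⟨A, hA⟩ := hev.exists_forall_of_atBot
      exact not_memLp_of_set (by norm_num) (by norm_num) hmemsq measurableSet_Iic
        Real.volume_Iic (by linarith : (0:ℝ) < L/2) (fun y hy => (hA y hy).le)
    rw [hL0] at hsqlim
    have habs : Tendsto (fun y => |φ y|) atBot (nhds 0) := by
      have := hsqlim.sqrt
      rw [Real.sqrt_zero] at this
      convert this using 2 with y
      rw [Real.sqrt_sq_eq_abs]
    exact tendsto_of_tendsto_of_tendsto_of_le_of_le (by simpa using habs.neg) habs
      (fun y => neg_abs_le _) (fun y => le_abs_self _)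


lemma prod_integrable {φ₁ φ₂ : ℝ → ℝ} (h1c : Continuous φ₁) (h2c : Continuous φ₂)
    (h1 : MemLp φ₁ 2 (volume : Measure ℝ)) (h2 : MemLp φ₂ 2 (volume : Measure ℝ)) :
    Integrable (fun y => φ₁ y * φ₂ y) (volume : Measure ℝ) := by
  refine Integrable.mono' ((h1.integrable_sq).add (h2.integrable_sq))
    (h1c.mul h2c).aestronglyMeasurable ?_
  filter_upwards with y
  simp only [Pi.add_apply, Real.norm_eq_abs]
  exact abs_le.mpr ⟨by nlinarith [sq_nonneg (φ₁ y + φ₂ y)], by nlinarith [sq_nonneg (φ₁ y - φ₂ y)]⟩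

lemma eigen_orthogonal {Q φ₁ φ₁' φ₂ φ₂' : ℝ → ℝ} {lam₁ lam₂ : ℝ}
    (h1d : ∀ y, HasDerivAt φ₁ (φ₁' y) y)
    (h1d2 : ∀ y, HasDerivAt φ₁' ((Q y - lam₁) * φ₁ y) y)
    (h2d : ∀ y, HasDerivAt φ₂ (φ₂' y) y)
    (h2d2 : ∀ y, HasDerivAt φ₂' ((Q y - lam₂) * φ₂ y) y)
    (hQc : Continuous Q)
    (h1L2 : MemLp φ₁ 2 (volume : Measure ℝ)) (h1'L2 : MemLp φ₁' 2 (volume : Measure ℝ))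
    (h1''L2 : MemLp (fun y => (Q y - lam₁) * φ₁ y) 2 (volume : Measure ℝ))
    (h2L2 : MemLp φ₂ 2 (volume : Measure ℝ)) (h2'L2 : MemLp φ₂' 2 (volume : Measure ℝ))
    (h2''L2 : MemLp (fun y => (Q y - lam₂) * φ₂ y) 2 (volume : Measure ℝ)) :
    (lam₂ - lam₁) * ∫ y : ℝ, φ₁ y * φ₂ y = 0 := by
  have h1c : Continuous φ₁ := continuous_iff_continuousAt.mpr fun y => (h1d y).continuousAt
  have h2c : Continuous φ₂ := continuous_iff_continuousAt.mpr fun y => (h2d y).continuousAt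
  have h1'c : Continuous φ₁' := continuous_iff_continuousAt.mpr fun y => (h1d2 y).continuousAt
  have h2'c : Continuous φ₂' := continuous_iff_continuousAt.mpr fun y => (h2d2 y).continuousAt
  have hint : Integrable (fun y => φ₁ y * φ₂ y) (volume : Measure ℝ) :=
    prod_integrable h1c h2c h1L2 h2L2
  -- limits
  have t1 := tendsto_zero_of_L2 h1d h1'c h1L2 h1'L2
  have t2 := tendsto_zero_of_L2 h2d h2'c h2L2 h2'L2
  have t1' := tendsto_zero_of_L2 h1d2 ((hQc.sub continuous_const).mul h1c) h1'L2 h1''L2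
  have t2' := tendsto_zero_of_L2 h2d2 ((hQc.sub continuous_const).mul h2c) h2'L2 h2''L2
  set W : ℝ → ℝ := fun y => φ₁' y * φ₂ y - φ₁ y * φ₂' y with hW
  have hWd : ∀ y, HasDerivAt W ((lam₂ - lam₁) * (φ₁ y * φ₂ y)) y := by
    intro y
    have := ((h1d2 y).fun_mul (h2d y)).fun_sub ((h1d y).fun_mul (h2d2 y))
    exact this.congr_deriv (by ring)
  have hWtop : Tendsto W atTop (nhds 0) := by
    rw [hW]
    have := (t1'.1.mul t2.1).sub (t1.1.mul t2'.1)
    simpa using this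
  have hWbot : Tendsto W atBot (nhds 0) := by
    rw [hW]
    have := (t1'.2.mul t2.2).sub (t1.2.mul t2'.2)
    simpa using this
  set g : ℝ → ℝ := fun y => (lam₂ - lam₁) * (φ₁ y * φ₂ y) with hg
  have hgc : Continuous g := continuous_const.mul (h1c.mul h2c)
  have hgint : Integrable g (volume : Measure ℝ) := hint.const_mul _
  have hftc : ∀ A : ℝ, ∫ x in (-A)..A, g x = W A - W (-A) := fun A =>
    intervalIntegral.integral_eq_sub_of_hasDerivAt (fun t _ => hWd t)
      (hgc.intervalIntegrable _ _)
  have T1 : Tendsto (fun A : ℝ => ∫ x in (-A)..A, g x) atTop (nhds (∫ y : ℝ, g y)) :=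
    intervalIntegral_tendsto_integral hgint tendsto_neg_atTop_atBot tendsto_id
  have T2 : Tendsto (fun A : ℝ => ∫ x in (-A)..A, g x) atTop (nhds 0) := by
    simp only [hftc]
    have := hWtop.sub (hWbot.comp tendsto_neg_atTop_atBot)
    simpa using this
  have : ∫ y : ℝ, g y = 0 := tendsto_nhds_unique T1 T2
  rw [← integral_const_mul]
  simpa using this

lemma sign_const {φ : ℝ → ℝ} (hc : Continuous φ) (hne : ∀ y, φ y ≠ 0) :
    (∀ y, 0 < φ y) ∨ (∀ y, φ y < 0) := by
  rcases (hne 0).lt_or_gt with h0 | h0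
  · right
    intro y
    rcases (hne y).lt_or_gt with h | h
    · exact h
    · exfalso
      have : (0:ℝ) ∈ uIcc (φ 0) (φ y) := by
        rw [mem_uIcc]; left; exact ⟨h0.le, h.le⟩
      obtain ⟨u, _, hu⟩ := intermediate_value_uIcc hc.continuousOn this
      exact hne u hu
  · left
    intro y
    rcases (hne y).lt_or_gt with h | h
    · exfalso
      have : (0:ℝ) ∈ uIcc (φ 0) (φ y) := by
        rw [mem_uIcc]; right; exact ⟨h.le, h0.le⟩
      obtain ⟨u, _, hu⟩ := intermediate_value_uIcc hc.continuousOn this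
      exact hne u hu
    · exact h

lemma integral_prod_ne_zero {φ₁ φ₂ : ℝ → ℝ} (h1c : Continuous φ₁) (h2c : Continuous φ₂)
    (h1 : MemLp φ₁ 2 (volume : Measure ℝ)) (h2 : MemLp φ₂ 2 (volume : Measure ℝ))
    (hne1 : ∀ y, φ₁ y ≠ 0) (hne2 : ∀ y, φ₂ y ≠ 0) :
    ∫ y : ℝ, φ₁ y * φ₂ y ≠ 0 := by
  have hint : Integrable (fun y => φ₁ y * φ₂ y) (volume : Measure ℝ) :=
    prod_integrable h1c h2c h1 h2
  have key : ∀ f : ℝ → ℝ, Integrable f (volume : Measure ℝ) → (∀ y, 0 < f y) →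
      0 < ∫ y : ℝ, f y := by
    intro f hfi hfp
    rw [integral_pos_iff_support_of_nonneg (fun y => (hfp y).le) hfi]
    have : Function.support f = univ := by
      ext y; simp [Function.mem_support, (hfp y).ne']
    rw [this]
    simp
  rcases sign_const h1c hne1 with hs1 | hs1 <;> rcases sign_const h2c hne2 with hs2 | hs2
  · exact (key _ hint (fun y => mul_pos (hs1 y) (hs2 y))).ne'
  · intro hcon
    have := key (fun y => φ₁ y * -φ₂ y)
      (hint.neg.congr (Eventually.of_forall fun y => by simp only [Pi.neg_apply]; ring))
      (fun y => mul_pos (hs1 y) (by linarith [hs2 y]))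
    simp only [mul_neg] at this
    rw [integral_neg, hcon] at this
    simp at this
  · intro hcon
    have := key (fun y => -φ₁ y * φ₂ y)
      (hint.neg.congr (Eventually.of_forall fun y => by simp only [Pi.neg_apply]; ring))
      (fun y => mul_pos (by linarith [hs1 y]) (hs2 y))
    simp only [neg_mul] at this
    rw [integral_neg, hcon] at this
    simp at this
  · exact (key _ (by simpa using hint) (fun y => mul_pos_of_neg_of_neg (hs1 y) (hs2 y))).ne'

section Concrete
variable {ν M γ₀ γ₁ γ₂ t : ℝ}

lemma gauss_cont {c a : ℝ} : Continuous (fun z : ℝ => c * Real.exp (-z^2 / a)) :=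
  continuous_const.mul (Real.continuous_exp.comp ((continuous_pow 2).neg.div_const a))

lemma gauss_hasDeriv {c a : ℝ} (y : ℝ) :
    HasDerivAt (fun z : ℝ => c * Real.exp (-z^2 / a))
      (c * Real.exp (-y^2 / a) * (-2*y/a)) y := by
  have h1 : HasDerivAt (fun z : ℝ => -z^2 / a) (-2*y/a) y := by
    have := ((hasDerivAt_pow 2 y).fun_neg).div_const a
    exact this.congr_deriv (by ring)
  have := (h1.exp).const_mul c
  exact this.congr_deriv (by ring)

lemma integral_gauss_hasDeriv {c a : ℝ} (y : ℝ) :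
    HasDerivAt (fun u : ℝ => ∫ z in (0:ℝ)..u, c * Real.exp (-z^2 / a))
      (c * Real.exp (-y^2 / a)) y := by
  exact intervalIntegral.integral_hasDerivAt_right
    (gauss_cont.intervalIntegrable _ _)
    (gauss_cont.stronglyMeasurableAtFilter _ _)
    gauss_cont.continuousAt

lemma shearFlow_hasDeriv (y : ℝ) :
    HasDerivAt (shearFlow ν M γ₀ γ₁ γ₂ t)
      (1 + M * (γ₀^2 / Real.sqrt (4*ν*t + γ₀^2) * Real.exp (-y^2 / (4*ν*t + γ₀^2))
        - γ₂ * (γ₀^2 * γ₁^3 / Real.sqrt (4*ν*t + γ₀^2*γ₁^2) *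
          Real.exp (-y^2 / (4*ν*t + γ₀^2*γ₁^2))))) y := by
  unfold shearFlow
  exact (hasDerivAt_id y).add
    (((integral_gauss_hasDeriv y).sub ((integral_gauss_hasDeriv y).const_mul γ₂)).const_mul M)

lemma shearFlow_hasDeriv2 (y : ℝ) :
    HasDerivAt (fun y => 1 + M * (γ₀^2 / Real.sqrt (4*ν*t + γ₀^2) * Real.exp (-y^2 / (4*ν*t + γ₀^2))
        - γ₂ * (γ₀^2 * γ₁^3 / Real.sqrt (4*ν*t + γ₀^2*γ₁^2) *
          Real.exp (-y^2 / (4*ν*t + γ₀^2*γ₁^2)))))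
      (M * (γ₀^2 / Real.sqrt (4*ν*t + γ₀^2) * Real.exp (-y^2 / (4*ν*t + γ₀^2)) * (-2*y/(4*ν*t + γ₀^2))
        - γ₂ * (γ₀^2 * γ₁^3 / Real.sqrt (4*ν*t + γ₀^2*γ₁^2) *
          Real.exp (-y^2 / (4*ν*t + γ₀^2*γ₁^2)) * (-2*y/(4*ν*t + γ₀^2*γ₁^2))))) y := by
  exact (((gauss_hasDeriv y).sub ((gauss_hasDeriv y).const_mul γ₂)).const_mul M).const_add 1

end Concrete

section Pos
variable {ν M γ₀ γ₁ γ₂ t : ℝ} (hν : 0 < ν) (hM : 0 < M)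
  (hγ₀ : γ₀ ∈ Set.Ioo (0:ℝ) 1) (hγ₁ : γ₁ ∈ Set.Ioo (0:ℝ) 1)
  (hγ₂ : γ₂ ∈ Set.Ioo (0:ℝ) 1) (ht : 0 ≤ t)

include hν hγ₀ hγ₁ hγ₂ ht in
lemma key_nonneg (z : ℝ) :
    0 ≤ γ₀^2 / Real.sqrt (4*ν*t + γ₀^2) * Real.exp (-z^2 / (4*ν*t + γ₀^2))
      - γ₂ * (γ₀^2 * γ₁^3 / Real.sqrt (4*ν*t + γ₀^2*γ₁^2) *
        Real.exp (-z^2 / (4*ν*t + γ₀^2*γ₁^2))) := by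
  obtain ⟨hγ₀0, hγ₀1⟩ := hγ₀
  obtain ⟨hγ₁0, hγ₁1⟩ := hγ₁
  obtain ⟨hγ₂0, hγ₂1⟩ := hγ₂
  set a : ℝ := 4*ν*t + γ₀^2 with ha
  set a' : ℝ := 4*ν*t + γ₀^2*γ₁^2 with ha'
  have h4νt : 0 ≤ 4*ν*t := by positivity
  have hapos : 0 < a := by rw [ha]; positivity
  have ha'pos : 0 < a' := by rw [ha']; positivity
  have hγ₁sq : γ₁^2 ≤ 1 := by nlinarith
  have haa' : a' ≤ a := by
    rw [ha, ha']
    nlinarith [mul_le_mul_of_nonneg_left hγ₁sq (sq_nonneg γ₀)]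
  have hga : γ₁^2 * a ≤ a' := by
    rw [ha, ha']
    nlinarith [mul_le_mul_of_nonneg_left hγ₁sq h4νt]
  have hsa : 0 < Real.sqrt a := Real.sqrt_pos.mpr hapos
  have hsa' : 0 < Real.sqrt a' := Real.sqrt_pos.mpr ha'pos
  have hE : Real.exp (-z^2 / a') ≤ Real.exp (-z^2 / a) := by
    apply Real.exp_le_exp.mpr
    rw [neg_div, neg_div, neg_le_neg_iff]
    exact div_le_div_of_nonneg_left (sq_nonneg z) ha'pos haa'
  have h1 : γ₁ * Real.sqrt a ≤ Real.sqrt a' := by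
    have h2 := Real.sqrt_le_sqrt hga
    rwa [Real.sqrt_mul (sq_nonneg γ₁) a, Real.sqrt_sq hγ₁0.le] at h2
  have hcoef : γ₂ * (γ₀^2 * γ₁^3 / Real.sqrt a') ≤ γ₀^2 / Real.sqrt a := by
    rw [mul_div_assoc', div_le_div_iff₀ hsa' hsa]
    have hint1 := mul_le_mul_of_nonneg_left h1
      (show (0:ℝ) ≤ γ₂ * γ₁^2 * γ₀^2 by positivity)
    have hint2 : 0 ≤ (1 - γ₂ * γ₁^2) * γ₀^2 * Real.sqrt a' := by
      have : γ₂ * γ₁^2 ≤ 1 := by nlinarith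
      have h0 : (0:ℝ) ≤ 1 - γ₂ * γ₁^2 := by linarith
      positivity
    nlinarith [hint1, hint2]
  have hE0 : (0:ℝ) ≤ Real.exp (-z^2 / a') := (Real.exp_pos _).le
  have hE0' : (0:ℝ) ≤ Real.exp (-z^2 / a) := (Real.exp_pos _).le
  have hchain : γ₂ * (γ₀^2 * γ₁^3 / Real.sqrt a' * Real.exp (-z^2 / a')) ≤
      γ₀^2 / Real.sqrt a * Real.exp (-z^2 / a) := by
    calc γ₂ * (γ₀^2 * γ₁^3 / Real.sqrt a' * Real.exp (-z^2 / a'))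
        = (γ₂ * (γ₀^2 * γ₁^3 / Real.sqrt a')) * Real.exp (-z^2 / a') := by ring
      _ ≤ (γ₂ * (γ₀^2 * γ₁^3 / Real.sqrt a')) * Real.exp (-z^2 / a) := by
          apply mul_le_mul_of_nonneg_left hE
          positivity
      _ ≤ γ₀^2 / Real.sqrt a * Real.exp (-z^2 / a) :=
          mul_le_mul_of_nonneg_right hcoef hE0'
  linarith
end Pos

section Rest
variable {ν M γ₀ γ₁ γ₂ t : ℝ} (hν : 0 < ν) (hM : 0 < M)
  (hγ₀ : γ₀ ∈ Set.Ioo (0:ℝ) 1) (hγ₁ : γ₁ ∈ Set.Ioo (0:ℝ) 1)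
  (hγ₂ : γ₂ ∈ Set.Ioo (0:ℝ) 1) (ht : 0 ≤ t)

lemma shearFlow_zero : shearFlow ν M γ₀ γ₁ γ₂ t 0 = 0 := by
  unfold shearFlow
  simp [intervalIntegral.integral_same]

include hν hM hγ₀ hγ₁ hγ₂ ht in
lemma shearFlow_bounds :
    (∀ y : ℝ, 0 ≤ y → y ≤ shearFlow ν M γ₀ γ₁ γ₂ t y) ∧
    (∀ y : ℝ, y ≤ 0 → shearFlow ν M γ₀ γ₁ γ₂ t y ≤ y) := by
  set D : ℝ → ℝ := fun y => shearFlow ν M γ₀ γ₁ γ₂ t y - y with hD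
  have hDd : ∀ y, HasDerivAt D
      (M * (γ₀^2 / Real.sqrt (4*ν*t + γ₀^2) * Real.exp (-y^2 / (4*ν*t + γ₀^2))
        - γ₂ * (γ₀^2 * γ₁^3 / Real.sqrt (4*ν*t + γ₀^2*γ₁^2) *
          Real.exp (-y^2 / (4*ν*t + γ₀^2*γ₁^2))))) y := by
    intro y
    have := (shearFlow_hasDeriv (ν := ν) (M := M) (γ₀ := γ₀) (γ₁ := γ₁) (γ₂ := γ₂) (t := t) y).fun_sub
      (hasDerivAt_id y)
    exact this.congr_deriv (by ring)
  have hmono : Monotone D := by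
    apply monotone_of_deriv_nonneg (fun y => (hDd y).differentiableAt)
    intro y
    rw [(hDd y).deriv]
    exact mul_nonneg hM.le (key_nonneg hν hγ₀ hγ₁ hγ₂ ht y)
  have hD0 : D 0 = 0 := by rw [hD]; simp [shearFlow_zero]
  constructor
  · intro y hy
    have := hmono hy
    rw [hD0] at this
    simp only [hD] at this
    linarith
  · intro y hy
    have := hmono hy
    rw [hD0] at this
    simp only [hD] at this
    linarith

include hν hM hγ₀ hγ₁ hγ₂ ht in
lemma shearFlow_ne_zero {y : ℝ} (hy : y ≠ 0) : shearFlow ν M γ₀ γ₁ γ₂ t y ≠ 0 := by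
  rcases hy.lt_or_gt with h | h
  · have := (shearFlow_bounds hν hM hγ₀ hγ₁ hγ₂ ht).2 y h.le
    linarith
  · have := (shearFlow_bounds hν hM hγ₀ hγ₁ hγ₂ ht).1 y h.le
    linarith

lemma shearFlow_deriv_eq :
    deriv (shearFlow ν M γ₀ γ₁ γ₂ t) = fun y =>
      (1 + M * (γ₀^2 / Real.sqrt (4*ν*t + γ₀^2) * Real.exp (-y^2 / (4*ν*t + γ₀^2))
        - γ₂ * (γ₀^2 * γ₁^3 / Real.sqrt (4*ν*t + γ₀^2*γ₁^2) *
          Real.exp (-y^2 / (4*ν*t + γ₀^2*γ₁^2))))) :=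
  funext fun y => (shearFlow_hasDeriv y).deriv

lemma shearFlow_deriv2_eq (y : ℝ) :
    deriv (deriv (shearFlow ν M γ₀ γ₁ γ₂ t)) y =
      M * (γ₀^2 / Real.sqrt (4*ν*t + γ₀^2) * Real.exp (-y^2 / (4*ν*t + γ₀^2)) * (-2*y/(4*ν*t + γ₀^2))
        - γ₂ * (γ₀^2 * γ₁^3 / Real.sqrt (4*ν*t + γ₀^2*γ₁^2) *
          Real.exp (-y^2 / (4*ν*t + γ₀^2*γ₁^2)) * (-2*y/(4*ν*t + γ₀^2*γ₁^2)))) := by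
  rw [shearFlow_deriv_eq]
  exact (shearFlow_hasDeriv2 y).deriv

end Rest

section QFacts
variable {ν M γ₀ γ₁ γ₂ t : ℝ} (hν : 0 < ν) (hM : 0 < M)
  (hγ₀ : γ₀ ∈ Set.Ioo (0:ℝ) 1) (hγ₁ : γ₁ ∈ Set.Ioo (0:ℝ) 1)
  (hγ₂ : γ₂ ∈ Set.Ioo (0:ℝ) 1) (ht : 0 ≤ t)

include hν hM hγ₀ hγ₁ hγ₂ ht in
lemma qb_eq (q : ℝ → ℝ)
    (hq : ∀ y : ℝ, y ≠ 0 →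
      q y = deriv (deriv (shearFlow ν M γ₀ γ₁ γ₂ t)) y / shearFlow ν M γ₀ γ₁ γ₂ t y)
    {y : ℝ} (hy : y ≠ 0) :
    M * (γ₀^2 / Real.sqrt (4*ν*t + γ₀^2) * Real.exp (-y^2 / (4*ν*t + γ₀^2)) * (-2*y/(4*ν*t + γ₀^2))
        - γ₂ * (γ₀^2 * γ₁^3 / Real.sqrt (4*ν*t + γ₀^2*γ₁^2) *
          Real.exp (-y^2 / (4*ν*t + γ₀^2*γ₁^2)) * (-2*y/(4*ν*t + γ₀^2*γ₁^2))))
      = q y * shearFlow ν M γ₀ γ₁ γ₂ t y := by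
  have hB := shearFlow_ne_zero hν hM hγ₀ hγ₁ hγ₂ ht hy
  rw [hq y hy, shearFlow_deriv2_eq, div_mul_cancel₀ _ hB]

lemma shearFlow_deriv2_cont :
    Continuous (fun y : ℝ =>
      M * (γ₀^2 / Real.sqrt (4*ν*t + γ₀^2) * Real.exp (-y^2 / (4*ν*t + γ₀^2)) * (-2*y/(4*ν*t + γ₀^2))
        - γ₂ * (γ₀^2 * γ₁^3 / Real.sqrt (4*ν*t + γ₀^2*γ₁^2) *
          Real.exp (-y^2 / (4*ν*t + γ₀^2*γ₁^2)) * (-2*y/(4*ν*t + γ₀^2*γ₁^2))))) := by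
  apply continuous_const.mul
  apply Continuous.sub
  · exact (gauss_cont (c := γ₀^2 / Real.sqrt (4*ν*t + γ₀^2)) (a := 4*ν*t + γ₀^2)).mul
      ((continuous_const.mul continuous_id).div_const _)
  · exact continuous_const.mul
      ((gauss_cont (c := γ₀^2 * γ₁^3 / Real.sqrt (4*ν*t + γ₀^2*γ₁^2)) (a := 4*ν*t + γ₀^2*γ₁^2)).mul
        ((continuous_const.mul continuous_id).div_const _))

include hν hM hγ₀ hγ₁ hγ₂ ht in
lemma q_continuous (q : ℝ → ℝ) (hq0 : ContinuousAt q 0)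
    (hq : ∀ y : ℝ, y ≠ 0 →
      q y = deriv (deriv (shearFlow ν M γ₀ γ₁ γ₂ t)) y / shearFlow ν M γ₀ γ₁ γ₂ t y) :
    Continuous q := by
  rw [continuous_iff_continuousAt]
  intro y₀
  rcases eq_or_ne y₀ 0 with rfl | hy₀
  · exact hq0
  · have hBc : Continuous (shearFlow ν M γ₀ γ₁ γ₂ t) :=
      continuous_iff_continuousAt.mpr fun y => (shearFlow_hasDeriv y).continuousAt
    have hB0 : shearFlow ν M γ₀ γ₁ γ₂ t y₀ ≠ 0 := shearFlow_ne_zero hν hM hγ₀ hγ₁ hγ₂ ht hy₀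
    have hc : ContinuousAt (fun y =>
        M * (γ₀^2 / Real.sqrt (4*ν*t + γ₀^2) * Real.exp (-y^2 / (4*ν*t + γ₀^2)) * (-2*y/(4*ν*t + γ₀^2))
          - γ₂ * (γ₀^2 * γ₁^3 / Real.sqrt (4*ν*t + γ₀^2*γ₁^2) *
            Real.exp (-y^2 / (4*ν*t + γ₀^2*γ₁^2)) * (-2*y/(4*ν*t + γ₀^2*γ₁^2))))
          / shearFlow ν M γ₀ γ₁ γ₂ t y) y₀ :=
      shearFlow_deriv2_cont.continuousAt.div hBc.continuousAt hB0
    apply hc.congr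
    have hopen : {y : ℝ | y ≠ 0} ∈ nhds y₀ := isOpen_ne.mem_nhds hy₀
    filter_upwards [hopen] with y hy
    rw [hq y hy, shearFlow_deriv2_eq]
end QFacts


/-- at-most-one-negative-eigenvalue part of Lemma 2.1.
With `b = b(t,·)` the shear flow and `q` the continuous extension of `b''/b`, if
`λ₁ < 0` and `λ₂ < 0` are both eigenvalues of the Schrödinger operator
`L = −d²/dy² + q` (with `C²` eigenfunctions in `L²` together with their first two
derivatives), then `λ₁ = λ₂`. -/
theorem at_most_one_negative_eigenvalue (ν M γ₀ γ₁ γ₂ t : ℝ) (hν : 0 < ν) (hM : 0 < M)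
    (hγ₀ : γ₀ ∈ Set.Ioo (0:ℝ) 1) (hγ₁ : γ₁ ∈ Set.Ioo (0:ℝ) 1)
    (hγ₂ : γ₂ ∈ Set.Ioo (0:ℝ) 1) (ht : 0 ≤ t)
    (q : ℝ → ℝ) (hq0 : ContinuousAt q 0)
    (hq : ∀ y : ℝ, y ≠ 0 →
      q y = deriv (deriv (shearFlow ν M γ₀ γ₁ γ₂ t)) y / shearFlow ν M γ₀ γ₁ γ₂ t y)
    (lam₁ lam₂ : ℝ) (hlam₁ : lam₁ < 0) (hlam₂ : lam₂ < 0)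
    (φ₁ φ₂ : ℝ → ℝ)
    (hφ₁ne : φ₁ ≠ 0) (hφ₂ne : φ₂ ≠ 0)
    (hφ₁ : ContDiff ℝ 2 φ₁) (hφ₂ : ContDiff ℝ 2 φ₂)
    (hφ₁L2 : MemLp φ₁ 2 (volume : Measure ℝ))
    (hφ₁'L2 : MemLp (deriv φ₁) 2 (volume : Measure ℝ))
    (hφ₁''L2 : MemLp (deriv (deriv φ₁)) 2 (volume : Measure ℝ))
    (hφ₂L2 : MemLp φ₂ 2 (volume : Measure ℝ))
    (hφ₂'L2 : MemLp (deriv φ₂) 2 (volume : Measure ℝ))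
    (hφ₂''L2 : MemLp (deriv (deriv φ₂)) 2 (volume : Measure ℝ))
    (heq₁ : ∀ y : ℝ, -deriv (deriv φ₁) y + q y * φ₁ y = lam₁ * φ₁ y)
    (heq₂ : ∀ y : ℝ, -deriv (deriv φ₂) y + q y * φ₂ y = lam₂ * φ₂ y) :
    lam₁ = lam₂ := by
  -- abbreviations for the explicit first and second derivatives of the shear flow
  set B : ℝ → ℝ := shearFlow ν M γ₀ γ₁ γ₂ t with hBdef
  set Bp : ℝ → ℝ := fun y =>
    1 + M * (γ₀^2 / Real.sqrt (4*ν*t + γ₀^2) * Real.exp (-y^2 / (4*ν*t + γ₀^2))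
      - γ₂ * (γ₀^2 * γ₁^3 / Real.sqrt (4*ν*t + γ₀^2*γ₁^2) *
        Real.exp (-y^2 / (4*ν*t + γ₀^2*γ₁^2)))) with hBpdef
  set Bpp : ℝ → ℝ := fun y =>
    M * (γ₀^2 / Real.sqrt (4*ν*t + γ₀^2) * Real.exp (-y^2 / (4*ν*t + γ₀^2)) * (-2*y/(4*ν*t + γ₀^2))
      - γ₂ * (γ₀^2 * γ₁^3 / Real.sqrt (4*ν*t + γ₀^2*γ₁^2) *
        Real.exp (-y^2 / (4*ν*t + γ₀^2*γ₁^2)) * (-2*y/(4*ν*t + γ₀^2*γ₁^2)))) with hBppdef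
  have hBd : ∀ y, HasDerivAt B (Bp y) y := fun y => shearFlow_hasDeriv y
  have hBd2 : ∀ y, HasDerivAt Bp (Bpp y) y := fun y => shearFlow_hasDeriv2 y
  have hQB : ∀ y, y ≠ 0 → Bpp y = q y * B y := fun y hy =>
    qb_eq hν hM hγ₀ hγ₁ hγ₂ ht q hq hy
  have hbounds := shearFlow_bounds hν hM hγ₀ hγ₁ hγ₂ ht
  have hBpos : ∀ y, 0 ≤ y → y ≤ B y := hbounds.1
  have hBneg : ∀ y, y ≤ 0 → B y ≤ y := hbounds.2
  have hQc : Continuous q := q_continuous hν hM hγ₀ hγ₁ hγ₂ ht q hq0 hq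
  -- data for φ₁
  have hφ₁d : ∀ y, HasDerivAt φ₁ (deriv φ₁ y) y := fun y =>
    ((hφ₁.differentiable (by norm_num)) y).hasDerivAt
  have hder1eq : ∀ y, deriv (deriv φ₁) y = (q y - lam₁) * φ₁ y := fun y => by
    linear_combination (-1 : ℝ) * heq₁ y
  have hφ₁c1 : ContDiff ℝ 1 (deriv φ₁) := by
    have h2 : ContDiff ℝ ((1:ℕ)+1 : ℕ) φ₁ := by exact_mod_cast hφ₁
    exact (contDiff_succ_iff_deriv.mp h2).2.2
  have hφ₁d2 : ∀ y, HasDerivAt (deriv φ₁) ((q y - lam₁) * φ₁ y) y := fun y =>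
    (hder1eq y) ▸ ((hφ₁c1.differentiable one_ne_zero) y).hasDerivAt
  have hφ₁''L2' : MemLp (fun y => (q y - lam₁) * φ₁ y) 2 (volume : Measure ℝ) := by
    have : (fun y => (q y - lam₁) * φ₁ y) = deriv (deriv φ₁) :=
      funext fun y => (hder1eq y).symm
    rw [this]; exact hφ₁''L2
  -- data for φ₂
  have hφ₂d : ∀ y, HasDerivAt φ₂ (deriv φ₂ y) y := fun y =>
    ((hφ₂.differentiable (by norm_num)) y).hasDerivAt
  have hder2eq : ∀ y, deriv (deriv φ₂) y = (q y - lam₂) * φ₂ y := fun y => by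
    linear_combination (-1 : ℝ) * heq₂ y
  have hφ₂c1 : ContDiff ℝ 1 (deriv φ₂) := by
    have h2 : ContDiff ℝ ((1:ℕ)+1 : ℕ) φ₂ := by exact_mod_cast hφ₂
    exact (contDiff_succ_iff_deriv.mp h2).2.2
  have hφ₂d2 : ∀ y, HasDerivAt (deriv φ₂) ((q y - lam₂) * φ₂ y) y := fun y =>
    (hder2eq y) ▸ ((hφ₂c1.differentiable one_ne_zero) y).hasDerivAt
  have hφ₂''L2' : MemLp (fun y => (q y - lam₂) * φ₂ y) 2 (volume : Measure ℝ) := by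
    have : (fun y => (q y - lam₂) * φ₂ y) = deriv (deriv φ₂) :=
      funext fun y => (hder2eq y).symm
    rw [this]; exact hφ₂''L2
  -- nodelessness
  have hnz1 : ∀ y, φ₁ y ≠ 0 := fun y h =>
    absurd h (fun h => nodeless hBd hBd2 hQB hBpos hBneg hQc hφ₁d hφ₁d2 hφ₁L2 hlam₁ hφ₁ne h)
  have hnz2 : ∀ y, φ₂ y ≠ 0 := fun y h =>
    absurd h (fun h => nodeless hBd hBd2 hQB hBpos hBneg hQc hφ₂d hφ₂d2 hφ₂L2 hlam₂ hφ₂ne h)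
  -- orthogonality
  have horth : (lam₂ - lam₁) * ∫ y : ℝ, φ₁ y * φ₂ y = 0 :=
    eigen_orthogonal hφ₁d hφ₁d2 hφ₂d hφ₂d2 hQc hφ₁L2 hφ₁'L2 hφ₁''L2'
      hφ₂L2 hφ₂'L2 hφ₂''L2'
  have h1c : Continuous φ₁ := hφ₁.continuous
  have h2c : Continuous φ₂ := hφ₂.continuous
  have hip : ∫ y : ℝ, φ₁ y * φ₂ y ≠ 0 :=
    integral_prod_ne_zero h1c h2c hφ₁L2 hφ₂L2 hnz1 hnz2
  rcases mul_eq_zero.mp horth with h | h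
  · linarith
  · exact absurd h hip

end
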